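/- Let (I, E) be a finite simple graph with weights Φ : I → ℝ, let f(x) := arctan(e^x), F(x) := ∫_{−∞}^{x} arctan(e^t) dt, and define the Bobenko–Springborn functional BS(ρ) := Σ_{{i,j}∈E} [ F(ρ_j − ρ_i) + F(ρ_i − ρ_j) − (π/2)(ρ_i + ρ_j) ] + Σ_{i∈I} Φ_i ρ_i for ρ ∈ ℝ^I. Then BS is differentiable with ∂BS/∂ρ_i = Φ_i − Σ_{j : {i,j}∈E} 2·arctan(e^{ρ_j − ρ_i}); in particular ρ is a critical point of BS if and only if Σ_{j : {i,j}∈E} 2·arctan(e^{ρ_j − ρ_i}) = Φ_i holds for every i ∈ I. -/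

import Mathlib

noncomputable section

/-- `F x = ∫_{-∞}^x arctan (e^t) dt`. -/
def Fint (x : ℝ) : ℝ := ∫ t in Set.Iio x, Real.arctan (Real.exp t)

section Aux
open Finset MeasureTheory

lemma arctan_le_self {x : ℝ} (hx : 0 ≤ x) : Real.arctan x ≤ x := by
  have h1 : (0:ℝ) ≤ Real.arctan x := by
    simpa using Real.arctan_strictMono.monotone hx
  calc Real.arctan x ≤ Real.tan (Real.arctan x) :=
        Real.le_tan h1 (Real.arctan_lt_pi_div_two x)
    _ = x := Real.tan_arctan x

lemma integrableOn_arctan_exp (x : ℝ) :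
    IntegrableOn (fun t => Real.arctan (Real.exp t)) (Set.Iio x) := by
  have hexp : IntegrableOn Real.exp (Set.Iio x) :=
    (integrableOn_exp_Iic x).mono_set Set.Iio_subset_Iic_self
  refine hexp.mono' ?_ ?_
  · exact (Real.continuous_arctan.comp Real.continuous_exp).aestronglyMeasurable
  · filter_upwards with t
    rw [Real.norm_eq_abs, abs_of_nonneg (by simpa using Real.arctan_strictMono.monotone (Real.exp_pos t).le)]
    exact arctan_le_self (Real.exp_pos t).le

lemma hasDerivAt_Fint (x : ℝ) : HasDerivAt Fint (Real.arctan (Real.exp x)) x := by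
  have hc : Continuous fun t => Real.arctan (Real.exp t) :=
    Real.continuous_arctan.comp Real.continuous_exp
  have key : ∀ y : ℝ, Fint y = (∫ t in Set.Iio (0:ℝ), Real.arctan (Real.exp t))
      + ∫ t in (0:ℝ)..y, Real.arctan (Real.exp t) := by
    intro y
    have h := intervalIntegral.integral_Iic_sub_Iic
      ((integrableOn_arctan_exp 0).congr_set_ae MeasureTheory.Iio_ae_eq_Iic.symm)
      ((integrableOn_arctan_exp y).congr_set_ae MeasureTheory.Iio_ae_eq_Iic.symm)
    rw [integral_Iic_eq_integral_Iio, integral_Iic_eq_integral_Iio] at h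
    unfold Fint
    linarith [h]
  have hder : HasDerivAt (fun y => (∫ t in Set.Iio (0:ℝ), Real.arctan (Real.exp t))
      + ∫ t in (0:ℝ)..y, Real.arctan (Real.exp t)) (Real.arctan (Real.exp x)) x := by
    have := (intervalIntegral.integral_hasDerivAt_right (hc.intervalIntegrable 0 x)
      (hc.stronglyMeasurableAtFilter _ _) hc.continuousAt)
    exact this.const_add _
  exact hder.congr_deriv rfl |>.congr_of_eventuallyEq (Filter.Eventually.of_forall fun y => (key y))

lemma sum_lift_edgeFinset {I : Type*} [Fintype I] [DecidableEq I]
    (G : SimpleGraph I) [DecidableRel G.Adj] (g : I → I → ℝ) :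
    ∑ e ∈ G.edgeFinset, Sym2.lift ⟨fun a b => g a b + g b a, fun a b => by ring⟩ e
      = ∑ a, ∑ b ∈ G.neighborFinset a, g a b := by
  classical
  have hRHS : ∑ a, ∑ b ∈ G.neighborFinset a, g a b
      = ∑ p ∈ univ.filter (fun p : I × I => G.Adj p.1 p.2), g p.1 p.2 := by
    rw [Finset.sum_filter, show (Finset.univ : Finset (I × I)) = Finset.univ ×ˢ Finset.univ
      from Finset.univ_product_univ.symm, Finset.sum_product]
    refine Finset.sum_congr rfl fun a _ => ?_
    rw [SimpleGraph.neighborFinset_eq_filter, Finset.sum_filter]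
  rw [hRHS, ← Finset.sum_fiberwise_of_maps_to (t := G.edgeFinset) (g := fun p : I × I => Sym2.mk p.1 p.2)
    (fun p hp => by
      simp only [Finset.mem_filter] at hp
      simpa [SimpleGraph.mem_edgeFinset] using hp.2)
    (fun p : I × I => g p.1 p.2)]
  refine Finset.sum_congr rfl fun e he => ?_
  rw [SimpleGraph.mem_edgeFinset] at he
  induction e with
  | _ v w =>
    have hadj : G.Adj v w := he
    have hfib : (univ.filter (fun p : I × I => G.Adj p.1 p.2)).filter
        (fun p : I × I => Sym2.mk p.1 p.2 = s(v, w)) = {(v, w), (w, v)} := by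
      ext ⟨a, b⟩
      simp only [Finset.mem_filter, Finset.mem_univ, true_and, Finset.mem_insert,
        Finset.mem_singleton, Sym2.eq_iff, Prod.mk.injEq]
      constructor
      · rintro ⟨-, (⟨rfl, rfl⟩ | ⟨rfl, rfl⟩)⟩
        · exact Or.inl ⟨rfl, rfl⟩
        · exact Or.inr ⟨rfl, rfl⟩
      · rintro (⟨rfl, rfl⟩ | ⟨rfl, rfl⟩)
        · exact ⟨hadj, Or.inl ⟨rfl, rfl⟩⟩
        · exact ⟨hadj.symm, Or.inr ⟨rfl, rfl⟩⟩
    rw [hfib, Finset.sum_pair (by simp [hadj.ne] : ((v, w) : I × I) ≠ (w, v))]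
    simp [Sym2.lift_mk]
end Aux

/-- The Bobenko–Springborn functional
`BS(ρ) = Σ_{{i,j}∈E} [F(ρ_j-ρ_i) + F(ρ_i-ρ_j) - (π/2)(ρ_i+ρ_j)] + Σ_i Φ_i ρ_i`. -/
def BS {I : Type*} [Fintype I] [DecidableEq I] (G : SimpleGraph I) [DecidableRel G.Adj]
    (Φ : I → ℝ) (ρ : I → ℝ) : ℝ :=
  (∑ e ∈ G.edgeFinset,
    Sym2.lift
      ⟨fun i j => Fint (ρ j - ρ i) + Fint (ρ i - ρ j) - Real.pi / 2 * (ρ i + ρ j),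
       fun i j => by ring⟩ e)
  + ∑ i, Φ i * ρ i

section Aux2
open Finset MeasureTheory

lemma BS_eq {I : Type*} [Fintype I] [DecidableEq I] (G : SimpleGraph I) [DecidableRel G.Adj]
    (Φ : I → ℝ) (ρ : I → ℝ) :
    BS G Φ ρ = (∑ a, ∑ b ∈ G.neighborFinset a, (Fint (ρ b - ρ a) - Real.pi / 2 * ρ a))
        + ∑ i, Φ i * ρ i := by
  unfold BS
  congr 1
  rw [← sum_lift_edgeFinset G (fun a b => Fint (ρ b - ρ a) - Real.pi / 2 * ρ a)]
  refine Finset.sum_congr rfl fun e he => ?_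
  induction e with
  | _ v w => simp only [Sym2.lift_mk]; ring

lemma arctan_exp_add {x : ℝ} : Real.arctan (Real.exp (-x)) = Real.pi / 2 - Real.arctan (Real.exp x) := by
  rw [Real.exp_neg, Real.arctan_inv_of_pos (Real.exp_pos x)]

end Aux2

/-- The Bobenko–Springborn functional is differentiable, its partial derivative in the
`i`-th coordinate is `Φ_i - Σ_{j : {i,j}∈E} 2 arctan (e^{ρ_j - ρ_i})`; in particular
`ρ` is a critical point of `BS` iff `Σ_{j : {i,j}∈E} 2 arctan (e^{ρ_j - ρ_i}) = Φ_i`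
for every `i`. -/
theorem BS_derivative {I : Type*} [Fintype I] [DecidableEq I]
    (G : SimpleGraph I) [DecidableRel G.Adj] (Φ : I → ℝ) :
    Differentiable ℝ (BS G Φ) ∧
    (∀ (ρ : I → ℝ) (i : I),
      HasDerivAt (fun t => BS G Φ (Function.update ρ i t))
        (Φ i - ∑ j ∈ G.neighborFinset i, 2 * Real.arctan (Real.exp (ρ j - ρ i)))
        (ρ i)) ∧
    (∀ ρ : I → ℝ,
      fderiv ℝ (BS G Φ) ρ = 0 ↔
        ∀ i, ∑ j ∈ G.neighborFinset i, 2 * Real.arctan (Real.exp (ρ j - ρ i)) = Φ i) := by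
  classical
  set f : ℝ → ℝ := fun x => Real.arctan (Real.exp x) with hf
  have hFd : Differentiable ℝ Fint := fun x => (hasDerivAt_Fint x).differentiableAt
  have hproj : ∀ b : I, Differentiable ℝ (fun ρ : I → ℝ => ρ b) := fun b =>
    (ContinuousLinearMap.proj b : (I → ℝ) →L[ℝ] ℝ).differentiable
  -- Differentiability
  have hdiff : Differentiable ℝ (BS G Φ) := by
    have : BS G Φ = fun ρ =>
        (∑ a, ∑ b ∈ G.neighborFinset a, (Fint (ρ b - ρ a) - Real.pi / 2 * ρ a))
          + ∑ i, Φ i * ρ i := funext fun ρ => BS_eq G Φ ρ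
    rw [this]
    refine Differentiable.add ?_ ?_
    · refine Differentiable.fun_sum fun a _ => Differentiable.fun_sum fun b _ => ?_
      exact (hFd.comp ((hproj b).sub (hproj a))).sub ((hproj a).const_mul _)
    · exact Differentiable.fun_sum fun j _ => (hproj j).const_mul _
  -- Partial derivatives
  have hpart : ∀ (ρ : I → ℝ) (i : I),
      HasDerivAt (fun t => BS G Φ (Function.update ρ i t))
        (Φ i - ∑ j ∈ G.neighborFinset i, 2 * f (ρ j - ρ i)) (ρ i) := by
    intro ρ i
    set D : I → I → ℝ := fun a b =>
      if a = i then (-(f (ρ b - ρ i)) - Real.pi / 2) else if b = i then f (ρ i - ρ a) else 0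
      with hD
    have hterm : ∀ a, ∀ b ∈ G.neighborFinset a,
        HasDerivAt (fun t => Fint (Function.update ρ i t b - Function.update ρ i t a)
          - Real.pi / 2 * Function.update ρ i t a) (D a b) (ρ i) := by
      intro a b hb
      have hab : a ≠ b := (G.ne_of_adj (by simpa [SimpleGraph.mem_neighborFinset] using hb))
      by_cases ha : a = i
      · subst ha
        have hbi : b ≠ a := hab.symm
        have h1 : (fun t => Fint (Function.update ρ a t b - Function.update ρ a t a)
            - Real.pi / 2 * Function.update ρ a t a)
            = fun t => Fint (ρ b - t) - Real.pi / 2 * t := by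
          funext t; rw [Function.update_self, Function.update_of_ne hbi]
        have hDv : D a b = -(f (ρ b - ρ a)) - Real.pi / 2 := by simp [hD]
        rw [h1, hDv]
        have h2 : HasDerivAt (fun t : ℝ => ρ b - t) (-1) (ρ a) := by
          simpa using (hasDerivAt_id (ρ a)).const_sub (ρ b)
        have h3 := (hasDerivAt_Fint (ρ b - ρ a)).comp (ρ a) h2
        have h4 : HasDerivAt (fun t : ℝ => Real.pi / 2 * t) (Real.pi / 2) (ρ a) := by
          simpa using (hasDerivAt_id (ρ a)).const_mul (Real.pi / 2)
        have := h3.sub h4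
        refine this.congr_deriv ?_
        simp only [hf]
        ring
      · by_cases hbi : b = i
        · subst hbi
          have h1 : (fun t => Fint (Function.update ρ b t b - Function.update ρ b t a)
              - Real.pi / 2 * Function.update ρ b t a)
              = fun t => Fint (t - ρ a) - Real.pi / 2 * ρ a := by
            funext t; rw [Function.update_self, Function.update_of_ne ha]
          have hDv : D a b = f (ρ b - ρ a) := by simp [hD, ha]
          rw [h1, hDv]
          have h2 : HasDerivAt (fun t : ℝ => t - ρ a) 1 (ρ b) := by
            simpa using (hasDerivAt_id (ρ b)).sub_const (ρ a)
          have h3 := (hasDerivAt_Fint (ρ b - ρ a)).comp (ρ b) h2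
          have := h3.sub_const (Real.pi / 2 * ρ a)
          refine this.congr_deriv ?_
          simp only [hf]
          ring
        · have h1 : (fun t => Fint (Function.update ρ i t b - Function.update ρ i t a)
              - Real.pi / 2 * Function.update ρ i t a)
              = fun _ => Fint (ρ b - ρ a) - Real.pi / 2 * ρ a := by
            funext t; rw [Function.update_of_ne hbi, Function.update_of_ne ha]
          have hDv : D a b = 0 := by simp [hD, ha, hbi]
          rw [h1, hDv]
          exact hasDerivAt_const _ _
    have hlin : HasDerivAt (fun t => ∑ j, Φ j * Function.update ρ i t j) (Φ i) (ρ i) := by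
      have : ∀ j : I, HasDerivAt (fun t => Φ j * Function.update ρ i t j)
          (if j = i then Φ i else 0) (ρ i) := by
        intro j
        by_cases hj : j = i
        · subst hj
          simp only [if_pos rfl]
          have : (fun t => Φ j * Function.update ρ j t j) = fun t => Φ j * t := by
            funext t; rw [Function.update_self]
          rw [this]
          simpa using (hasDerivAt_id (ρ j)).const_mul (Φ j)
        · simp only [if_neg hj]
          have : (fun t => Φ j * Function.update ρ i t j) = fun _ => Φ j * ρ j := by
            funext t; rw [Function.update_of_ne hj]
          rw [this]
          exact hasDerivAt_const _ _
      have h := HasDerivAt.fun_sum (fun j (_ : j ∈ Finset.univ) => this j)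
      refine h.congr_deriv ?_
      rw [Finset.sum_ite_eq' Finset.univ i (fun _ => Φ i)]
      simp
    have hmain : HasDerivAt (fun t => BS G Φ (Function.update ρ i t))
        ((∑ a, ∑ b ∈ G.neighborFinset a, D a b) + Φ i) (ρ i) := by
      have h1 : (fun t => BS G Φ (Function.update ρ i t))
          = fun t => (∑ a, ∑ b ∈ G.neighborFinset a,
              (Fint (Function.update ρ i t b - Function.update ρ i t a)
                - Real.pi / 2 * Function.update ρ i t a))
            + ∑ j, Φ j * Function.update ρ i t j := funext fun t => BS_eq G Φ _
      rw [h1]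
      exact (HasDerivAt.fun_sum fun a _ => HasDerivAt.fun_sum fun b hb => hterm a b hb).add hlin
    have hval : (∑ a, ∑ b ∈ G.neighborFinset a, D a b) + Φ i
        = Φ i - ∑ j ∈ G.neighborFinset i, 2 * f (ρ j - ρ i) := by
      have hsplit : ∑ a, ∑ b ∈ G.neighborFinset a, D a b
          = (∑ b ∈ G.neighborFinset i, D i b)
            + ∑ a ∈ Finset.univ.erase i, ∑ b ∈ G.neighborFinset a, D a b :=
        (Finset.add_sum_erase _ _ (Finset.mem_univ i)).symm
      have h1 : ∑ b ∈ G.neighborFinset i, D i b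
          = ∑ b ∈ G.neighborFinset i, (-(f (ρ b - ρ i)) - Real.pi / 2) :=
        Finset.sum_congr rfl fun b _ => by rw [hD]; simp
      have h2 : ∑ a ∈ Finset.univ.erase i, ∑ b ∈ G.neighborFinset a, D a b
          = ∑ a ∈ G.neighborFinset i, f (ρ i - ρ a) := by
        have hstep : ∀ a ∈ Finset.univ.erase i, ∑ b ∈ G.neighborFinset a, D a b
            = if a ∈ G.neighborFinset i then f (ρ i - ρ a) else 0 := by
          intro a ha
          have hai : a ≠ i := (Finset.mem_erase.mp ha).1
          have : ∑ b ∈ G.neighborFinset a, D a b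
              = ∑ b ∈ G.neighborFinset a, (if b = i then f (ρ i - ρ a) else 0) :=
            Finset.sum_congr rfl fun b _ => by rw [hD]; simp [hai]
          rw [this, Finset.sum_ite_eq' (G.neighborFinset a) i (fun _ => f (ρ i - ρ a))]
          congr 1
          simp [SimpleGraph.mem_neighborFinset, SimpleGraph.adj_comm]
        rw [Finset.sum_congr rfl hstep,
          Finset.sum_erase (f := fun a => if a ∈ G.neighborFinset i then f (ρ i - ρ a) else 0)
            (a := i) Finset.univ (by simp),
          Finset.sum_ite_mem, Finset.univ_inter]
      rw [hsplit, h1, h2]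
      have h3 : ∑ a ∈ G.neighborFinset i, f (ρ i - ρ a)
          = ∑ a ∈ G.neighborFinset i, (Real.pi / 2 - f (ρ a - ρ i)) :=
        Finset.sum_congr rfl fun a _ => by
          rw [hf]; rw [show ρ i - ρ a = -(ρ a - ρ i) by ring]; exact arctan_exp_add
      rw [h3, ← Finset.sum_add_distrib]
      have h4 : ∑ j ∈ G.neighborFinset i,
          ((-(f (ρ j - ρ i)) - Real.pi / 2) + (Real.pi / 2 - f (ρ j - ρ i)))
          = ∑ j ∈ G.neighborFinset i, (-(2 * f (ρ j - ρ i))) :=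
        Finset.sum_congr rfl fun j _ => by ring
      rw [h4, Finset.sum_neg_distrib]
      ring
    rw [← hval]
    exact hmain
  refine ⟨hdiff, hpart, fun ρ => ?_⟩
  have hsingle : ∀ i, fderiv ℝ (BS G Φ) ρ (Pi.single i 1)
      = Φ i - ∑ j ∈ G.neighborFinset i, 2 * f (ρ j - ρ i) := by
    intro i
    have h0 : Function.update ρ i (ρ i) = ρ := Function.update_eq_self i ρ
    have h1 : HasFDerivAt (BS G Φ) (fderiv ℝ (BS G Φ) ρ) (Function.update ρ i (ρ i)) := by
      rw [h0]; exact (hdiff ρ).hasFDerivAt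
    have h2 := h1.comp_hasDerivAt (ρ i) (hasDerivAt_update ρ i (ρ i))
    exact h2.unique (hpart ρ i)
  constructor
  · intro h i
    have := hsingle i
    rw [h] at this
    simp only [ContinuousLinearMap.zero_apply] at this
    linarith [this]
  · intro h
    ext x
    have hx : x = ∑ i, x i • (Pi.single i 1 : I → ℝ) := by
      funext j
      simp [Finset.sum_apply, Pi.single_apply, Finset.sum_ite_eq']
    rw [hx, map_sum]
    refine Finset.sum_eq_zero fun i _ => ?_
    rw [_root_.map_smul, hsingle i]
    simp only [hf]
    rw [h i]
    simp
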